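/- Let (L, d_L, q_2, q_3, ...) be an L∞[1] R-algebra with corresponding codifferential D_Q = d̃_L + Q on S_R(L). Then the higher derived brackets of the splitting σ(x) = x ⊙ − recover the original structure: for all n ≥ 1 and x_1, …, x_n ∈ L, ev_{1_R}([⋯[[d̃_L + Q, σ(x_1)], σ(x_2)], ⋯, σ(x_n)]) = q_n(x_1, …, x_n). -/

import Mathlib

open scoped Classical TensorProduct

namespace Paper

noncomputable section
/-- `(-1)^i` for an integer `i`. -/
def sgn (i : ℤ) : ℤ := (-1) ^ i.natAbs

/-- The Koszul sign of a permutation `σ` acting on homogeneous elements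
of degrees `deg`. -/
def koszulSign {n : ℕ} (deg : Fin n → ℤ) (σ : Equiv.Perm (Fin n)) : ℤ :=
  ∏ p ∈ Finset.univ.filter (fun p : Fin n × Fin n => p.1 < p.2 ∧ σ p.2 < σ p.1),
    sgn (deg p.1 * deg p.2)

/-- `σ` is an `(i, n-i)`-unshuffle: it is increasing on the first `i`
positions and on the last `n - i` positions. -/
def IsUnshuffle (n i : ℕ) (σ : Equiv.Perm (Fin n)) : Prop :=
  ∀ a b : Fin n, a < b → (b.1 < i ∨ i ≤ a.1) → σ a < σ b

/-- `σ` is a multi-unshuffle with respect to the composition `c` of `n`: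
it is increasing on each block of `c`. -/
def IsMultiUnshuffle {n : ℕ} (c : Composition n) (σ : Equiv.Perm (Fin n)) : Prop :=
  ∀ a b : Fin n, a < b → c.index a = c.index b → σ a < σ b

/-- Iterated bracketing `[⋯[[z, y₀], y₁]⋯, y_{k-1}]`. -/
def iterBr {M : Type} (br : M → M → M) : (k : ℕ) → M → (Fin k → M) → M
  | 0, z, _ => z
  | k + 1, z, y => iterBr br k (br z (y 0)) (fun j => y j.succ)

section Defs

variable (K : Type) [Field K] (A : Type) [CommRing A] [Algebra K A]
variable (L : Type) [AddCommGroup L] [Module K L] [Module A L]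
variable (M : Type) [AddCommGroup M] [Module K M] [Module A M]

/-- `(A, 𝒜, dA)` is a unital differential graded-commutative algebra over `K`. -/
structure IsDGCA (𝒜 : ℤ → Submodule K A) (dA : A →ₗ[K] A) : Prop where
  isInternal : DirectSum.IsInternal 𝒜
  one_mem : (1 : A) ∈ 𝒜 0
  mul_mem : ∀ i j : ℤ, ∀ a b : A, a ∈ 𝒜 i → b ∈ 𝒜 j → a * b ∈ 𝒜 (i + j)
  mul_comm' : ∀ i j : ℤ, ∀ a b : A, a ∈ 𝒜 i → b ∈ 𝒜 j → a * b = sgn (i * j) • (b * a)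
  d_mem : ∀ i : ℤ, ∀ a ∈ 𝒜 i, dA a ∈ 𝒜 (i + 1)
  d_sq : ∀ a, dA (dA a) = 0
  leibniz : ∀ i : ℤ, ∀ a ∈ 𝒜 i, ∀ b, dA (a * b) = dA a * b + sgn i • (a * dA b)

/-- `(L, ℒ, dL)` is a DG module over the DGCA `(A, 𝒜, dA)`. -/
structure IsDGModule (𝒜 : ℤ → Submodule K A) (dA : A →ₗ[K] A)
    (ℒ : ℤ → Submodule K L) (dL : L →ₗ[K] L) : Prop where
  isInternal : DirectSum.IsInternal ℒ
  smul_mem : ∀ i j : ℤ, ∀ (a : A) (x : L), a ∈ 𝒜 i → x ∈ ℒ j → a • x ∈ ℒ (i + j)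
  d_mem : ∀ j : ℤ, ∀ x ∈ ℒ j, dL x ∈ ℒ (j + 1)
  d_sq : ∀ x, dL (dL x) = 0
  leibniz : ∀ i : ℤ, ∀ a ∈ 𝒜 i, ∀ x : L, dL (a • x) = dA a • x + sgn i • (a • dL x)

/-- A graded symmetric, graded `A`-multilinear map of degree `dg`. -/
structure IsGSMap (𝒜 : ℤ → Submodule K A) (ℒ : ℤ → Submodule K L)
    (ℳ : ℤ → Submodule K M) (dg : ℤ) (n : ℕ)
    (q : MultilinearMap K (fun _ : Fin n => L) M) : Prop where
  degree : ∀ (deg : Fin n → ℤ) (x : Fin n → L), (∀ k, x k ∈ ℒ (deg k)) →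
    q x ∈ ℳ ((∑ k, deg k) + dg)
  symm : ∀ (deg : Fin n → ℤ) (x : Fin n → L), (∀ k, x k ∈ ℒ (deg k)) →
    ∀ σ : Equiv.Perm (Fin n), q (x ∘ σ) = koszulSign deg σ • q x
  smul : ∀ (hn : 0 < n) (i : ℤ), ∀ a ∈ 𝒜 i, ∀ x : Fin n → L,
    q (Function.update x ⟨0, hn⟩ (a • x ⟨0, hn⟩)) = sgn (i * dg) • (a • q x)

/-- The sum `Σ_{i} Σ_{σ ∈ Sh(i, n-i)} ± outer_{n-i+1}(inner_i(x_{σ(1)},…), x_{σ(i+1)},…)`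
appearing in the `L∞[1]` identities (with Koszul signs w.r.t. degrees `deg`). -/
def insComp (outer : ∀ k : ℕ, MultilinearMap K (fun _ : Fin k => L) M)
    (inner : ∀ k : ℕ, MultilinearMap K (fun _ : Fin k => L) L)
    (n : ℕ) (deg : Fin n → ℤ) (x : Fin n → L) : M :=
  ∑ i : Fin (n + 1),
    ∑ σ ∈ Finset.univ.filter (fun σ : Equiv.Perm (Fin n) => IsUnshuffle n i.1 σ),
      koszulSign deg σ •
        outer (n - i.1 + 1)
          (Fin.cons
            (inner i.1 (fun k => x (σ (Fin.castLE (Nat.lt_succ_iff.mp i.isLt) k))))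
            (fun k => x (σ ⟨i.1 + k.1, by
              have h1 := i.isLt
              have h2 := k.isLt
              omega⟩)))

/-- The family of operations whose only nonzero component is the unary one, `d`. -/
def fam1 (d : L →ₗ[K] L) : ∀ n, MultilinearMap K (fun _ : Fin n => L) L
  | 1 => MultilinearMap.ofSubsingleton K L L (0 : Fin 1) d
  | _ => 0

/-- The family of operations whose only nonzero component is the `0`-ary one,
with value `x`. -/
def fam0 (x : L) : ∀ n, MultilinearMap K (fun _ : Fin n => L) L
  | 0 => MultilinearMap.constOfIsEmpty K (fun _ : Fin 0 => L) x
  | _ + 1 => 0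

/-- The generalized Jacobi identities of an `L∞[1]` algebra (on homogeneous elements). -/
def LInftyIdentity (ℒ : ℤ → Submodule K L)
    (q : ∀ k, MultilinearMap K (fun _ : Fin k => L) L) : Prop :=
  ∀ (n : ℕ) (deg : Fin n → ℤ) (x : Fin n → L), 1 ≤ n → (∀ k, x k ∈ ℒ (deg k)) →
    insComp K L L q q n deg x = 0

/-- An `L∞[1]` `R`-algebra structure (with `R = (A, 𝒜, dA)`) on the DG module
`(L, ℒ, dL)`; `q 1 = dL` and the higher brackets are graded symmetric graded
`A`-multilinear maps of degree 1 satisfying the generalized Jacobi identities. -/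
structure IsLInftyAlg (𝒜 : ℤ → Submodule K A) (dA : A →ₗ[K] A)
    (ℒ : ℤ → Submodule K L) (dL : L →ₗ[K] L)
    (q : ∀ k, MultilinearMap K (fun _ : Fin k => L) L) : Prop where
  dgca : IsDGCA K A 𝒜 dA
  dgmod : IsDGModule K A L 𝒜 dA ℒ dL
  q_zero : q 0 = 0
  q_one : ∀ x : L, q 1 (fun _ => x) = dL x
  gs : ∀ n, 2 ≤ n → IsGSMap K A L L 𝒜 ℒ ℒ 1 n (q n)
  jacobi : LInftyIdentity K L ℒ q

/-- `f` is a quasi-isomorphism of cochain complexes. -/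
structure IsQuasiIso (dL : L →ₗ[K] L) (dM : M →ₗ[K] M) (f : L →ₗ[K] M) : Prop where
  cochain : ∀ x, f (dL x) = dM (f x)
  surj : ∀ y : M, dM y = 0 → ∃ x z, dL x = 0 ∧ y = f x + dM z
  inj : ∀ x : L, dL x = 0 → (∃ z, f x = dM z) → ∃ w, x = dL w

/-- The sum over compositions `i₁ + ⋯ + i_k = n` (with `lo ≤ k`) and multi-unshuffles
`Σ (1/k!) Σ_σ ± post (outer_k (inner_{i₁}(x_{σ(1)},…), …, inner_{i_k}(…, x_{σ(n)})))`. -/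
def treeSum {X Y W Z : Type} [AddCommGroup X] [Module K X] [AddCommGroup Y] [Module K Y]
    [AddCommGroup W] [Module K W] [AddCommGroup Z] [Module K Z]
    (outer : ∀ k : ℕ, MultilinearMap K (fun _ : Fin k => Y) W)
    (inner : ∀ m : ℕ, MultilinearMap K (fun _ : Fin m => X) Y)
    (post : W →ₗ[K] Z) (lo : ℕ) (n : ℕ) (deg : Fin n → ℤ) (x : Fin n → X) : Z :=
  ∑ c : Composition n,
    if lo ≤ c.length then
      ∑ σ ∈ Finset.univ.filter (fun σ : Equiv.Perm (Fin n) => IsMultiUnshuffle c σ),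
        ((c.length).factorial : K)⁻¹ •
          (koszulSign deg σ •
            post (outer c.length
              (fun m => inner (c.blocksFun m) (fun t => x (σ (c.embedding m t))))))
    else 0

/-- `f = (f₁, f₂, …)` is an `L∞[1]` `R`-morphism from `(L, qL)` to `(M, qM)`. -/
structure IsLInftyMorph (𝒜 : ℤ → Submodule K A)
    (ℒ : ℤ → Submodule K L) (ℳ : ℤ → Submodule K M)
    (qL : ∀ k, MultilinearMap K (fun _ : Fin k => L) L)
    (qM : ∀ k, MultilinearMap K (fun _ : Fin k => M) M)
    (f : ∀ m, MultilinearMap K (fun _ : Fin m => L) M) : Prop where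
  f_zero : f 0 = 0
  gs : ∀ n, 1 ≤ n → IsGSMap K A L M 𝒜 ℒ ℳ 0 n (f n)
  identity : ∀ (n : ℕ) (deg : Fin n → ℤ) (x : Fin n → L), 1 ≤ n →
    (∀ k, x k ∈ ℒ (deg k)) →
    treeSum K qM f (LinearMap.id : M →ₗ[K] M) 1 n deg x = insComp K L M f qL n deg x

/-- The composition of two `L∞[1]`-morphism coefficient families, evaluated on a
homogeneous tuple. -/
def compFam {N : Type} [AddCommGroup N] [Module K N]
    (outer : ∀ k, MultilinearMap K (fun _ : Fin k => M) N)
    (inner : ∀ m, MultilinearMap K (fun _ : Fin m => L) M)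
    (n : ℕ) (deg : Fin n → ℤ) (x : Fin n → L) : N :=
  treeSum K outer inner (LinearMap.id : N →ₗ[K] N) 1 n deg x

/-- `f` is an `L∞[1]` `R`-isomorphism: it admits a two-sided inverse morphism. -/
def IsLInftyIso (𝒜 : ℤ → Submodule K A)
    (ℒ : ℤ → Submodule K L) (ℳ : ℤ → Submodule K M)
    (qL : ∀ k, MultilinearMap K (fun _ : Fin k => L) L)
    (qM : ∀ k, MultilinearMap K (fun _ : Fin k => M) M)
    (f : ∀ m, MultilinearMap K (fun _ : Fin m => L) M) : Prop :=
  IsLInftyMorph K A L M 𝒜 ℒ ℳ qL qM f ∧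
  ∃ g : ∀ m, MultilinearMap K (fun _ : Fin m => M) L,
    IsLInftyMorph K A M L 𝒜 ℳ ℒ qM qL g ∧
    (∀ (n : ℕ) (deg : Fin n → ℤ) (x : Fin n → L), 1 ≤ n → (∀ k, x k ∈ ℒ (deg k)) →
      compFam K L M g f n deg x = fam1 K L (LinearMap.id : L →ₗ[K] L) n x) ∧
    (∀ (n : ℕ) (deg : Fin n → ℤ) (y : Fin n → M), 1 ≤ n → (∀ k, y k ∈ ℳ (deg k)) →
      compFam K M L f g n deg y = fam1 K M (LinearMap.id : M →ₗ[K] M) n y)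

/-- A DG Lie algebra over the DGCA `(A, 𝒜, dA)`: a DG `A`-module with an
`A`-bilinear graded Lie bracket compatible with the differential. -/
structure IsDGLie (𝒜 : ℤ → Submodule K A) (dA : A →ₗ[K] A)
    (ℒ : ℤ → Submodule K L) (D : L →ₗ[K] L) (br : L →ₗ[K] L →ₗ[K] L) : Prop where
  dgmod : IsDGModule K A L 𝒜 dA ℒ D
  br_mem : ∀ i j : ℤ, ∀ x y : L, x ∈ ℒ i → y ∈ ℒ j → br x y ∈ ℒ (i + j)
  skew : ∀ i j : ℤ, ∀ x y : L, x ∈ ℒ i → y ∈ ℒ j → br x y = (- sgn (i * j)) • br y x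
  jacobi : ∀ i j : ℤ, ∀ x y z : L, x ∈ ℒ i → y ∈ ℒ j →
    br x (br y z) = br (br x y) z + sgn (i * j) • br y (br x z)
  leibniz : ∀ i : ℤ, ∀ x ∈ ℒ i, ∀ y, D (br x y) = br (D x) y + sgn i • br x (D y)
  smul_br : ∀ (a : A) (x y : L), br (a • x) y = a • br x y

end Defs

section Coalg

variable (K : Type) [Field K] (A : Type) [CommRing A] [Algebra K A]
variable (L : Type) [AddCommGroup L] [Module K L] [Module A L]
variable (SL : Type) [AddCommGroup SL] [Module K SL] [Module A SL]

/-- An (axiomatized) model of the symmetric `R`-coalgebra `S_R(L)` on the graded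
`A`-module `L`: `w n x = x₁ ⊙ ⋯ ⊙ xₙ` are the words, `one = 1_R`, `proj` is the
projection onto the cogenerators `L`, and `grade` is the total grading. -/
structure SymCoalg (𝒜 : ℤ → Submodule K A) (ℒ : ℤ → Submodule K L) where
  w : ∀ n : ℕ, MultilinearMap K (fun _ : Fin n => L) SL
  one : SL
  proj : SL →ₗ[A] L
  grade : ℤ → Submodule K SL
  one_def : one = w 0 (fun k => k.elim0)
  span_words : Submodule.span A {u : SL | ∃ n x, u = w n x} = ⊤
  proj_one : proj one = 0
  proj_w1 : ∀ y : L, proj (w 1 (fun _ => y)) = y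
  proj_w : ∀ (n : ℕ) (x : Fin n → L), n ≠ 1 → proj (w n x) = 0
  w_grade : ∀ (n : ℕ) (deg : Fin n → ℤ) (x : Fin n → L), (∀ k, x k ∈ ℒ (deg k)) →
    w n x ∈ grade (∑ k, deg k)
  smul_grade : ∀ (i j : ℤ) (a : A) (u : SL), a ∈ 𝒜 i → u ∈ grade j → a • u ∈ grade (i + j)
  w_symm : ∀ (n : ℕ) (deg : Fin n → ℤ) (x : Fin n → L), (∀ k, x k ∈ ℒ (deg k)) →
    ∀ σ : Equiv.Perm (Fin n), w n (x ∘ σ) = koszulSign deg σ • w n x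
  w_smul : ∀ (n : ℕ) (hn : 0 < n) (a : A) (x : Fin n → L),
    w n (Function.update x ⟨0, hn⟩ (a • x ⟨0, hn⟩)) = a • w n x

/-- The value on the word `x₁ ⊙ ⋯ ⊙ xₙ` of the coderivation of `S_R(L)` with Taylor
coefficients `q = (q₀, q₁, q₂, …)`:
`Σᵢ Σ_{σ ∈ Sh(i,n-i)} ± qᵢ(x_{σ(1)},…,x_{σ(i)}) ⊙ x_{σ(i+1)} ⊙ ⋯ ⊙ x_{σ(n)}`. -/
def coeffSum {𝒜 : ℤ → Submodule K A} {ℒ : ℤ → Submodule K L}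
    (S : SymCoalg K A L SL 𝒜 ℒ)
    (q : ∀ k, MultilinearMap K (fun _ : Fin k => L) L)
    (n : ℕ) (deg : Fin n → ℤ) (x : Fin n → L) : SL :=
  ∑ i : Fin (n + 1),
    ∑ σ ∈ Finset.univ.filter (fun σ : Equiv.Perm (Fin n) => IsUnshuffle n i.1 σ),
      koszulSign deg σ •
        S.w (n - i.1 + 1)
          (Fin.cons (q i.1 (fun k => x (σ (Fin.castLE (Nat.lt_succ_iff.mp i.isLt) k))))
            (fun k => x (σ ⟨i.1 + k.1, by
              have h1 := i.isLt
              have h2 := k.isLt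
              omega⟩)))

/-- `Q` is the (`A`-linear) coderivation of `S_R(L)` with Taylor coefficients `q`. -/
def HasCoeffs {𝒜 : ℤ → Submodule K A} {ℒ : ℤ → Submodule K L}
    (S : SymCoalg K A L SL 𝒜 ℒ) (Q : SL →ₗ[K] SL)
    (q : ∀ k, MultilinearMap K (fun _ : Fin k => L) L) : Prop :=
  ∀ (n : ℕ) (deg : Fin n → ℤ) (x : Fin n → L), (∀ k, x k ∈ ℒ (deg k)) →
    Q (S.w n x) = coeffSum K A L SL S q n deg x

/-- `Q` is graded `A`-linear of degree `dq` (with Koszul signs). -/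
def GradedLinear {𝒜 : ℤ → Submodule K A} {ℒ : ℤ → Submodule K L}
    (S : SymCoalg K A L SL 𝒜 ℒ) (dq : ℤ) (Q : SL →ₗ[K] SL) : Prop :=
  (∀ (i : ℤ), ∀ a ∈ 𝒜 i, ∀ u : SL, Q (a • u) = sgn (i * dq) • (a • Q u)) ∧
  (∀ (j : ℤ), ∀ u ∈ S.grade j, Q u ∈ S.grade (j + dq))

/-- The value on a word of the coderivation `d̃_L` induced by a unary operator `δ`:
`Σ_k ± x₁ ⊙ ⋯ ⊙ δ(x_k) ⊙ ⋯ ⊙ xₙ`. -/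
def dtilSum {𝒜 : ℤ → Submodule K A} {ℒ : ℤ → Submodule K L}
    (S : SymCoalg K A L SL 𝒜 ℒ) (δ : L →ₗ[K] L)
    (n : ℕ) (deg : Fin n → ℤ) (x : Fin n → L) : SL :=
  ∑ k : Fin n,
    sgn (∑ j ∈ Finset.univ.filter (fun j : Fin n => j < k), deg j) •
      S.w n (Function.update x k (δ (x k)))

/-- `D = d̃_δ + Q_q` : `D` acts on scalars by the Leibniz rule through `dA` and on
words as the coderivation determined by the unary operator `δ` together with the
`A`-multilinear Taylor coefficients `q`. -/
def HasCoeffsD {𝒜 : ℤ → Submodule K A} {ℒ : ℤ → Submodule K L}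
    (S : SymCoalg K A L SL 𝒜 ℒ) (dA : A →ₗ[K] A) (δ : L →ₗ[K] L)
    (q : ∀ k, MultilinearMap K (fun _ : Fin k => L) L) (D : SL →ₗ[K] SL) : Prop :=
  (∀ (i : ℤ), ∀ a ∈ 𝒜 i, ∀ u : SL, D (a • u) = dA a • u + sgn i • (a • D u)) ∧
  (∀ (n : ℕ) (deg : Fin n → ℤ) (x : Fin n → L), (∀ k, x k ∈ ℒ (deg k)) →
    D (S.w n x) = dtilSum K A L SL S δ n deg x + coeffSum K A L SL S q n deg x)

end Coalg

section Aux13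

lemma sgn_zero13 : sgn 0 = 1 := rfl

lemma koszulSign_one13 {n : ℕ} (deg : Fin n → ℤ) : koszulSign deg 1 = 1 := by
  unfold koszulSign
  rw [Finset.filter_false_of_mem, Finset.prod_empty]
  intro p _
  simp only [Equiv.Perm.coe_one, id_eq, not_and]
  intro h
  exact lt_asymm h

lemma strictMono_le13 {n : ℕ} (g : Fin n → Fin n) (hg : StrictMono g) : ∀ i, i ≤ g i := by
  suffices hh : ∀ (m : ℕ) (i : Fin n), i.1 ≤ m → i ≤ g i by
    intro i
    exact hh i.1 i le_rfl
  intro m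
  induction m with
  | zero =>
    intro i hi
    rw [Fin.le_def]
    omega
  | succ m ih =>
    intro i hi
    by_cases hc : i.1 ≤ m
    · exact ih i hc
    · have him : i.1 = m + 1 := by omega
      have hmn : m < n := by
        have := i.isLt
        omega
      have hji : (⟨m, hmn⟩ : Fin n) < i := by
        rw [Fin.lt_def]
        show m < i.1
        omega
      have hgg := hg hji
      have hjm := ih ⟨m, hmn⟩ le_rfl
      rw [Fin.lt_def] at hgg
      rw [Fin.le_def] at hjm ⊢
      have hjm' : m ≤ (g ⟨m, hmn⟩).1 := hjm
      have hgg' : (g ⟨m, hmn⟩).1 < (g i).1 := hgg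
      omega

lemma unshuffle_top13 {n : ℕ} (σ : Equiv.Perm (Fin n)) (h : IsUnshuffle n n σ) : σ = 1 := by
  have hmono : StrictMono σ := fun a b hab => h a b hab (Or.inl b.isLt)
  have hmono' : StrictMono (σ⁻¹ : Equiv.Perm (Fin n)) := by
    intro a b hab
    apply hmono.lt_iff_lt.mp
    simpa using hab
  refine Equiv.ext fun i => ?_
  have h1 : i ≤ σ i := strictMono_le13 _ hmono i
  have h2 : i ≤ σ⁻¹ i := strictMono_le13 _ hmono' i
  have h3 : σ i ≤ i := by
    have := hmono.monotone h2
    simpa using this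
  simpa using le_antisymm h3 h1

lemma sort_insert_max13 {n : ℕ} (T : Finset (Fin n)) (k : Fin n) (hk : ∀ j ∈ T, j < k) :
    (insert k T).sort (· ≤ ·) = T.sort (· ≤ ·) ++ [k] := by
  have hknT : k ∉ T := fun hmem => lt_irrefl k (hk k hmem)
  have hperm : List.Perm ((insert k T).sort (· ≤ ·)) (T.sort (· ≤ ·) ++ [k]) := by
    refine (Finset.sort_perm_toList _ _).trans ?_
    refine (Finset.toList_insert hknT).trans ?_
    refine (List.Perm.cons k (Finset.sort_perm_toList T (· ≤ ·)).symm).trans ?_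
    exact (List.perm_append_singleton _ _).symm
  have hsorted : List.Pairwise (· ≤ ·) (T.sort (· ≤ ·) ++ [k]) := by
    refine List.pairwise_append.mpr ⟨Finset.pairwise_sort _ _, List.pairwise_singleton _ _, ?_⟩
    intro a ha b hb
    rw [List.mem_singleton] at hb
    subst hb
    exact (hk a ((Finset.mem_sort (α := Fin n) (· ≤ ·)).mp ha)).le
  exact List.Perm.eq_of_pairwise' (Finset.pairwise_sort _ _) hsorted hperm

variable {K : Type} [Field K] {A : Type} [CommRing A] [Algebra K A]
variable {L : Type} [AddCommGroup L] [Module K L] [Module A L]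
variable {SL : Type} [AddCommGroup SL] [Module K SL] [Module A SL]
variable {𝒜 : ℤ → Submodule K A} {ℒ : ℤ → Submodule K L}

/-- Composition of a list of linear maps. -/
def chain13 {α : Type} (f : α → (SL →ₗ[K] SL)) : List α → (SL →ₗ[K] SL)
  | [] => LinearMap.id
  | a :: l => (f a).comp (chain13 f l)

lemma chain13_append {α : Type} (f : α → (SL →ₗ[K] SL)) (l₁ l₂ : List α) :
    chain13 f (l₁ ++ l₂) = (chain13 f l₁).comp (chain13 f l₂) := by
  induction l₁ with
  | nil => simp [chain13]
  | cons a l ih =>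
    show (f a).comp (chain13 f (l ++ l₂)) = ((f a).comp (chain13 f l)).comp (chain13 f l₂)
    rw [ih, LinearMap.comp_assoc]

lemma w_arity13 (S : SymCoalg K A L SL 𝒜 ℒ) {N N' : ℕ} (h : N = N') (z : Fin N → L) :
    S.w N z = S.w N' (fun t => z (Fin.cast h.symm t)) := by subst h; rfl

lemma chain13_one (S : SymCoalg K A L SL 𝒜 ℒ) {α : Type} (f : α → (SL →ₗ[K] SL)) (val : α → L)
    (hf : ∀ (a : α) (m : ℕ) (y : Fin m → L), f a (S.w m y) = S.w (m + 1) (Fin.cons (val a) y))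
    (l : List α) :
    chain13 f l S.one = S.w l.length (fun t => val (l.get t)) := by
  induction l with
  | nil =>
    show S.one = _
    rw [S.one_def]
    exact congrArg (S.w 0) (funext fun t => t.elim0)
  | cons a l ih =>
    show f a (chain13 f l S.one) = _
    rw [ih, hf]
    congr 1
    funext t
    refine Fin.cases ?_ ?_ t
    · rfl
    · intro s
      rw [Fin.cons_succ]
      rfl

lemma chain13_word (S : SymCoalg K A L SL 𝒜 ℒ) {α : Type} (f : α → (SL →ₗ[K] SL)) (val : α → L)
    (hf : ∀ (a : α) (m : ℕ) (y : Fin m → L), f a (S.w m y) = S.w (m + 1) (Fin.cons (val a) y))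
    (l : List α) (m : ℕ) (y : Fin m → L) :
    ∃ z : Fin (l.length + m) → L, chain13 f l (S.w m y) = S.w (l.length + m) z := by
  induction l with
  | nil =>
    exact ⟨_, w_arity13 S (show m = List.length ([] : List α) + m by simp) y⟩
  | cons a l ih =>
    obtain ⟨z, hz⟩ := ih
    have h1 : chain13 f (a :: l) (S.w m y) = S.w (l.length + m + 1) (Fin.cons (val a) z) := by
      show f a (chain13 f l (S.w m y)) = _
      rw [hz, hf]
    exact ⟨_, h1.trans (w_arity13 S (show l.length + m + 1 = (a :: l).length + m by
      simp only [List.length_cons]; omega) _)⟩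

lemma chain13_word_proj (S : SymCoalg K A L SL 𝒜 ℒ) {α : Type} (f : α → (SL →ₗ[K] SL))
    (val : α → L)
    (hf : ∀ (a : α) (m : ℕ) (y : Fin m → L), f a (S.w m y) = S.w (m + 1) (Fin.cons (val a) y))
    (l : List α) (m : ℕ) (y : Fin m → L) (h1 : l.length + m ≠ 1) :
    S.proj (chain13 f l (S.w m y)) = 0 := by
  obtain ⟨z, hz⟩ := chain13_word S f val hf l m y
  rw [hz]
  exact S.proj_w _ _ h1

lemma proj_w_cons13 (S : SymCoalg K A L SL 𝒜 ℒ) {m : ℕ} (hm : m = 0) (a : L) (g : Fin m → L) :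
    S.proj (S.w (m + 1) (Fin.cons a g)) = a := by
  subst hm
  have hfun : (Fin.cons a g : Fin (0 + 1) → L) = fun _ => a := by
    funext t
    have h0 : t = 0 := by
      apply Fin.ext
      simp only [Fin.val_zero]
      have := t.isLt
      omega
    rw [h0]
    rfl
  rw [hfun, S.proj_w1]

/-- Unrolling the iterated graded commutators `B k`. -/
lemma key13 (Dtot : SL →ₗ[K] SL)
    (n : ℕ) (deg : Fin n → ℤ)
    (f : Fin n → (SL →ₗ[K] SL))
    (B : Fin (n + 1) → (SL →ₗ[K] SL))
    (hB0 : B 0 = Dtot)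
    (hBrec : ∀ k : Fin n,
      B k.succ = B k.castSucc ∘ₗ f k
        - sgn ((1 + ∑ j ∈ Finset.univ.filter (fun j : Fin n => j < k), deg j)
            * deg k) • (f k ∘ₗ B k.castSucc)) :
    ∀ (k : ℕ) (hk : k ≤ n) (u : SL),
    B ⟨k, Nat.lt_succ_of_le hk⟩ u =
      ∑ Sb ∈ (Finset.univ.filter (fun j : Fin n => j.1 < k)).powerset,
        (∏ j ∈ Finset.univ.filter (fun j : Fin n => j.1 < k) \ Sb,
            (-(sgn ((1 + ∑ t ∈ Finset.univ.filter (fun t : Fin n => t < j), deg t) * deg j)))) •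
          chain13 f (((Finset.univ.filter (fun j : Fin n => j.1 < k) \ Sb).sort (· ≤ ·)).reverse)
            (Dtot (chain13 f (Sb.sort (· ≤ ·)) u)) := by
  intro k
  induction k with
  | zero =>
    intro hk u
    have hI : Finset.univ.filter (fun j : Fin n => j.1 < 0) = (∅ : Finset (Fin n)) := by
      ext j; simp
    rw [hI]
    rw [Finset.powerset_empty, Finset.sum_singleton, Finset.sdiff_empty, Finset.prod_empty,
      one_smul, Finset.sort_empty]
    show B ⟨0, _⟩ u = chain13 f [].reverse (Dtot (chain13 f [] u))
    rw [show (⟨0, Nat.lt_succ_of_le hk⟩ : Fin (n + 1)) = 0 from rfl, hB0]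
    rfl
  | succ k ih =>
    intro hk u
    have hkn : k < n := hk
    have hk' : k ≤ n := Nat.le_of_succ_le hk
    set κ : Fin n := ⟨k, hkn⟩ with hκ
    set Ik := Finset.univ.filter (fun j : Fin n => j.1 < k) with hIk
    have hI1 : Finset.univ.filter (fun j : Fin n => j.1 < k + 1) = insert κ Ik := by
      rw [hIk]
      ext j
      simp only [Finset.mem_filter, Finset.mem_univ, true_and, Finset.mem_insert, hκ,
        Fin.ext_iff]
      omega
    have hκI : κ ∉ Ik := by
      rw [hIk]
      simp [hκ]
    have hmemI : ∀ j ∈ Ik, j < κ := by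
      intro j hj
      rw [hIk] at hj
      simp only [Finset.mem_filter, Finset.mem_univ, true_and] at hj
      simpa [Fin.lt_def, hκ] using hj
    have hstep := DFunLike.congr_fun (hBrec κ) u
    simp only [LinearMap.sub_apply, LinearMap.comp_apply, LinearMap.smul_apply] at hstep
    have hcs : κ.castSucc = (⟨k, Nat.lt_succ_of_le hk'⟩ : Fin (n + 1)) := rfl
    rw [hcs] at hstep
    rw [ih hk' (f κ u), ih hk' u] at hstep
    rw [show (⟨k + 1, Nat.lt_succ_of_le hk⟩ : Fin (n + 1)) = κ.succ from rfl, hstep]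
    rw [hI1, Finset.sum_powerset_insert hκI]
    have e1 : ∀ Sb ∈ Ik.powerset,
        (∏ j ∈ insert κ Ik \ insert κ Sb,
            (-(sgn ((1 + ∑ t ∈ Finset.univ.filter (fun t : Fin n => t < j), deg t) * deg j)))) •
          chain13 f (((insert κ Ik \ insert κ Sb).sort (· ≤ ·)).reverse)
            (Dtot (chain13 f ((insert κ Sb).sort (· ≤ ·)) u)) =
        (∏ j ∈ Ik \ Sb,
            (-(sgn ((1 + ∑ t ∈ Finset.univ.filter (fun t : Fin n => t < j), deg t) * deg j)))) •
          chain13 f (((Ik \ Sb).sort (· ≤ ·)).reverse)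
            (Dtot (chain13 f (Sb.sort (· ≤ ·)) (f κ u))) := by
      intro Sb hSbmem
      have hSb : Sb ⊆ Ik := Finset.mem_powerset.mp hSbmem
      have hκSb : κ ∉ Sb := fun hc => hκI (hSb hc)
      have hset : insert κ Ik \ insert κ Sb = Ik \ Sb := by
        ext j
        simp only [Finset.mem_sdiff, Finset.mem_insert, not_or]
        constructor
        · rintro ⟨hj1 | hj1, hj2, hj3⟩
          · exact absurd hj1 hj2
          · exact ⟨hj1, hj3⟩
        · rintro ⟨hj1, hj3⟩
          exact ⟨Or.inr hj1, fun hc => hκI (hc ▸ hj1), hj3⟩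
      have hsort : (insert κ Sb).sort (· ≤ ·) = Sb.sort (· ≤ ·) ++ [κ] :=
        sort_insert_max13 _ _ (fun j hj => hmemI j (hSb hj))
      rw [hset, hsort, chain13_append]
      rfl
    have e2 : ∀ Sb ∈ Ik.powerset,
        (∏ j ∈ insert κ Ik \ Sb,
            (-(sgn ((1 + ∑ t ∈ Finset.univ.filter (fun t : Fin n => t < j), deg t) * deg j)))) •
          chain13 f (((insert κ Ik \ Sb).sort (· ≤ ·)).reverse)
            (Dtot (chain13 f (Sb.sort (· ≤ ·)) u)) =
        -((sgn ((1 + ∑ t ∈ Finset.univ.filter (fun t : Fin n => t < κ), deg t) * deg κ)) •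
          ((∏ j ∈ Ik \ Sb,
            (-(sgn ((1 + ∑ t ∈ Finset.univ.filter (fun t : Fin n => t < j), deg t) * deg j)))) •
          (f κ) (chain13 f (((Ik \ Sb).sort (· ≤ ·)).reverse)
            (Dtot (chain13 f (Sb.sort (· ≤ ·)) u))))) := by
      intro Sb hSbmem
      have hSb : Sb ⊆ Ik := Finset.mem_powerset.mp hSbmem
      have hκSb : κ ∉ Sb := fun hc => hκI (hSb hc)
      have hset2 : insert κ Ik \ Sb = insert κ (Ik \ Sb) :=
        Finset.insert_sdiff_of_notMem _ hκSb
      have hκId : κ ∉ Ik \ Sb := fun hc => hκI (Finset.mem_sdiff.mp hc).1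
      have hsort : (insert κ (Ik \ Sb)).sort (· ≤ ·) = (Ik \ Sb).sort (· ≤ ·) ++ [κ] :=
        sort_insert_max13 _ _ (fun j hj => hmemI j (Finset.mem_sdiff.mp hj).1)
      rw [hset2, Finset.prod_insert hκId, hsort]
      rw [show ((Ik \ Sb).sort (· ≤ ·) ++ [κ]).reverse = κ :: ((Ik \ Sb).sort (· ≤ ·)).reverse
        by simp]
      rw [show chain13 f (κ :: ((Ik \ Sb).sort (· ≤ ·)).reverse)
          = (f κ).comp (chain13 f (((Ik \ Sb).sort (· ≤ ·)).reverse)) from rfl]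
      rw [LinearMap.comp_apply, neg_mul, neg_smul, mul_smul]
    rw [Finset.sum_congr rfl e2, Finset.sum_congr rfl e1]
    rw [map_sum]
    simp only [map_zsmul]
    rw [Finset.smul_sum, Finset.sum_neg_distrib, sub_eq_add_neg, add_comm]

end Aux13

/-- For an `L∞[1]` `R`-algebra `(L, d_L, q₂, …)` with codifferential
`D_Q = d̃_L + Q` on `S_R(L)`, the higher derived brackets of the splitting
`σ(x) = x ⊙ −` recover the original brackets:
`ev_{1_R}([⋯[[D_Q, σ(x₁)], σ(x₂)],⋯, σ(xₙ)]) = q_n(x₁, …, xₙ)`. -/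
theorem statement_13
    (K : Type) [Field K] (A : Type) [CommRing A] [Algebra K A]
    (L : Type) [AddCommGroup L] [Module K L] [Module A L]
    (SL : Type) [AddCommGroup SL] [Module K SL] [Module A SL]
    (𝒜 : ℤ → Submodule K A) (dA : A →ₗ[K] A)
    (ℒ : ℤ → Submodule K L) (dL : L →ₗ[K] L)
    (q : ∀ k, MultilinearMap K (fun _ : Fin k => L) L)
    (h : IsLInftyAlg K A L 𝒜 dA ℒ dL q)
    (S : SymCoalg K A L SL 𝒜 ℒ)
    (Dtot : SL →ₗ[K] SL)
    (hD : HasCoeffsD K A L SL S dA dL (fun n => if n = 1 then 0 else q n) Dtot)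
    (Sσ : L → (SL →ₗ[K] SL))
    (hSσ : ∀ (x : L) (n : ℕ) (y : Fin n → L),
      Sσ x (S.w n y) = S.w (n + 1) (Fin.cons x y))
    (hSσone : ∀ x : L, Sσ x S.one = S.w 1 (fun _ => x)) :
    ∀ (n : ℕ) (deg : Fin n → ℤ) (x : Fin n → L), 1 ≤ n → (∀ k, x k ∈ ℒ (deg k)) →
      ∀ B : Fin (n + 1) → (SL →ₗ[K] SL),
        B 0 = Dtot →
        (∀ k : Fin n,
          B k.succ = B k.castSucc ∘ₗ Sσ (x k)
            - sgn ((1 + ∑ j ∈ Finset.univ.filter (fun j : Fin n => j < k), deg j)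
                * deg k) • (Sσ (x k) ∘ₗ B k.castSucc)) →
        S.proj (B (Fin.last n) S.one) = q n x := by
  intro n deg x hn hx B hB0 hBrec
  classical
  have hfw : ∀ (a : Fin n) (m : ℕ) (y : Fin m → L),
      (fun j => Sσ (x j)) a (S.w m y) = S.w (m + 1) (Fin.cons (x a) y) :=
    fun a m y => hSσ (x a) m y
  have main := key13 Dtot n deg (fun j => Sσ (x j)) B hB0 hBrec n (le_refl n) S.one
  rw [show Fin.last n = (⟨n, Nat.lt_succ_of_le (le_refl n)⟩ : Fin (n + 1)) from rfl, main]
  have huniv : Finset.univ.filter (fun j : Fin n => j.1 < n) = Finset.univ := by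
    ext j; simp [j.isLt]
  rw [huniv, map_sum]
  simp only [map_zsmul]
  have hkill : ∀ Sb ∈ (Finset.univ : Finset (Fin n)).powerset, Sb ≠ Finset.univ →
      (∏ j ∈ Finset.univ \ Sb,
          (-(sgn ((1 + ∑ t ∈ Finset.univ.filter (fun t : Fin n => t < j), deg t) * deg j)))) •
        S.proj (chain13 (fun j => Sσ (x j)) (((Finset.univ \ Sb).sort (· ≤ ·)).reverse)
          (Dtot (chain13 (fun j => Sσ (x j)) (Sb.sort (· ≤ ·)) S.one))) = 0 := by
    intro Sb _ hSbne
    have hTne : (Finset.univ \ Sb).Nonempty := by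
      rw [Finset.sdiff_nonempty]
      intro hc
      exact hSbne (Finset.univ_subset_iff.mp hc)
    have hTcard : 1 ≤ (((Finset.univ \ Sb).sort (· ≤ ·)).reverse).length := by
      rw [List.length_reverse, Finset.length_sort]
      exact Finset.card_pos.mpr hTne
    rw [chain13_one S (fun j => Sσ (x j)) x hfw (Sb.sort (· ≤ ·))]
    rw [hD.2 (Sb.sort (· ≤ ·)).length (fun t => deg ((Sb.sort (· ≤ ·)).get t))
      (fun t => x ((Sb.sort (· ≤ ·)).get t)) (fun t => hx _), map_add, map_add]
    have hz1 : S.proj (chain13 (fun j => Sσ (x j)) (((Finset.univ \ Sb).sort (· ≤ ·)).reverse)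
        (dtilSum K A L SL S dL (Sb.sort (· ≤ ·)).length
          (fun t => deg ((Sb.sort (· ≤ ·)).get t)) (fun t => x ((Sb.sort (· ≤ ·)).get t)))) = 0 := by
      unfold dtilSum
      simp only [map_sum, map_zsmul]
      apply Finset.sum_eq_zero
      intro t _
      have ht := t.pos
      have hne1 : (((Finset.univ \ Sb).sort (· ≤ ·)).reverse).length
          + (Sb.sort (· ≤ ·)).length ≠ 1 := by omega
      rw [chain13_word_proj S (fun j => Sσ (x j)) x hfw _ _ _ hne1, smul_zero]
    have hz2 : S.proj (chain13 (fun j => Sσ (x j)) (((Finset.univ \ Sb).sort (· ≤ ·)).reverse)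
        (coeffSum K A L SL S (fun m => if m = 1 then 0 else q m) (Sb.sort (· ≤ ·)).length
          (fun t => deg ((Sb.sort (· ≤ ·)).get t)) (fun t => x ((Sb.sort (· ≤ ·)).get t)))) = 0 := by
      unfold coeffSum
      simp only [map_sum, map_zsmul]
      apply Finset.sum_eq_zero
      intro i _
      apply Finset.sum_eq_zero
      intro σ _
      have hne1 : (((Finset.univ \ Sb).sort (· ≤ ·)).reverse).length
          + ((Sb.sort (· ≤ ·)).length - i.1 + 1) ≠ 1 := by omega
      rw [chain13_word_proj S (fun j => Sσ (x j)) x hfw _ _ _ hne1, smul_zero]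
    rw [hz1, hz2, add_zero, smul_zero]
  rw [Finset.sum_eq_single_of_mem Finset.univ (Finset.mem_powerset_self _) hkill]
  rw [Finset.sdiff_self, Finset.prod_empty, one_smul, Finset.sort_empty, List.reverse_nil]
  rw [show chain13 (fun j => Sσ (x j)) ([] : List (Fin n)) = LinearMap.id from rfl]
  rw [chain13_one S (fun j => Sσ (x j)) x hfw]
  rw [show (Finset.univ : Finset (Fin n)).sort (· ≤ ·) = List.finRange n from Fin.sort_univ n]
  have hwx : S.w (List.finRange n).length (fun t => x ((List.finRange n).get t)) = S.w n x := by
    rw [w_arity13 S (List.length_finRange (n := n))]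
    congr 1
    funext t
    congr 1
    apply Fin.ext
    simp [List.get_finRange]
  rw [LinearMap.id_apply, hwx, hD.2 n deg x hx, map_add]
  by_cases hn1 : n = 1
  · subst hn1
    have hdtil : S.proj (dtilSum K A L SL S dL 1 deg x) = q 1 x := by
      unfold dtilSum
      rw [Fin.sum_univ_one]
      have hfe : Finset.univ.filter (fun j : Fin 1 => j < 0) = ∅ := by
        ext j
        simp [Fin.lt_def]
      rw [hfe, Finset.sum_empty, sgn_zero13, one_smul]
      have hupd : Function.update x 0 (dL (x 0)) = fun _ : Fin 1 => dL (x 0) := by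
        funext t
        rw [Subsingleton.elim t 0, Function.update_self]
      rw [hupd, S.proj_w1, ← h.q_one (x 0)]
      congr 1
      funext t
      rw [Subsingleton.elim t 0]
    have hzq : ∀ (m : ℕ), m ≤ 1 → ∀ (args : Fin m → L),
        (if m = 1 then 0 else q m) args = 0 := by
      intro m hm args
      interval_cases m
      · rw [if_neg (by omega), h.q_zero]
        rfl
      · rw [if_pos rfl]
        rfl
    have hcoeff : S.proj (coeffSum K A L SL S (fun m => if m = 1 then 0 else q m) 1 deg x)
        = 0 := by
      unfold coeffSum
      rw [map_sum]
      apply Finset.sum_eq_zero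
      intro i _
      rw [map_sum]
      apply Finset.sum_eq_zero
      intro σ _
      have hi : i.1 ≤ 1 := Nat.lt_succ_iff.mp i.isLt
      by_cases hi0 : i.1 = 1
      · have h10 : 1 - i.1 = 0 := by rw [hi0]
        rw [map_zsmul, proj_w_cons13 S h10, hzq i.1 hi, smul_zero]
      · have h2 : 1 - i.1 + 1 ≠ 1 := by omega
        rw [map_zsmul, S.proj_w _ _ h2, smul_zero]
    rw [hdtil, hcoeff, add_zero]
  · have hdtil : S.proj (dtilSum K A L SL S dL n deg x) = 0 := by
      unfold dtilSum
      rw [map_sum]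
      apply Finset.sum_eq_zero
      intro t _
      rw [map_zsmul, S.proj_w _ _ hn1, smul_zero]
    have hcoeff : S.proj (coeffSum K A L SL S (fun m => if m = 1 then 0 else q m) n deg x)
        = q n x := by
      unfold coeffSum
      rw [map_sum]
      refine Eq.trans (Finset.sum_eq_single_of_mem (Fin.last n) (Finset.mem_univ _) ?_) ?_
      · intro i _ hine
        have hilt : i.1 < n := by
          have h1 := Nat.lt_succ_iff.mp i.isLt
          have h2 : i.1 ≠ n := fun hc => hine (Fin.ext (by simp [hc, Fin.val_last]))
          omega
        rw [map_sum]
        apply Finset.sum_eq_zero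
        intro σ _
        rw [map_zsmul, S.proj_w _ _ (by omega), smul_zero]
      · have hfilt : Finset.univ.filter
            (fun σ : Equiv.Perm (Fin n) => IsUnshuffle n (Fin.last n).1 σ) = {1} := by
          ext σ
          simp only [Finset.mem_filter, Finset.mem_univ, true_and, Finset.mem_singleton,
            Fin.val_last]
          constructor
          · exact unshuffle_top13 σ
          · rintro rfl
            intro a b hab _
            simpa using hab
        rw [map_sum, hfilt, Finset.sum_singleton, map_zsmul, koszulSign_one13, one_smul]
        rw [proj_w_cons13 S (show n - (Fin.last n).1 = 0 by simp)]
        simp only [Fin.val_last]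
        rw [if_neg hn1]
        exact congrArg (fun g => (q n) g) (funext fun ksub => rfl)
    rw [hdtil, hcoeff, zero_add]

end

end Paper
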